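/- Let X be a set, ν an ordinal, and g : Ordinal → Ordinal. Suppose that for each pair of ordinals (μ, β') with μ < ν and β' < g(μ) we are given a sequence (x^{μ,β'}_i)_{i∈ℕ} of elements of X and two sequences (a^{μ,β'}_i)_{i∈ℕ} and (b^{μ,β'}_i)_{i∈ℕ} of finite subsets of X. Then (∃_cf μ < ν)(∃_cf β' < g(μ)) [the sequence (a^{μ,β'}_i ∪ b^{μ,β'}_i)_{i∈ℕ} subsumes (x^{μ,β'}_i)_{i∈ℕ}] holds if and only if (∃_cf μ < ν)(∃_cf β' < g(μ)) [(a^{μ,β'}_i)_{i∈ℕ} subsumes (x^{μ,β'}_i)_{i∈ℕ}] holds, or (∃_cf μ < ν)(∃_cf β' < g(μ)) [(b^{μ,β'}_i)_{i∈ℕ} subsumes (x^{μ,β'}_i)_{i∈ℕ}] holds. (This is the key equivalence in the paper's Lemma 5.7, establishing that each operation f_{α,β,i} of the algebra M_δ commutes with the join-semilattice structure.) -/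
import Mathlib


universe u

/-- A sequence `a` of finite subsets of `X` *subsumes* a sequence `x` of elements of `X`
if there is an infinite `M ⊆ ℕ` such that for all `i, j ∈ M` with `i < j`, `x i ∈ a j`. -/
def Subsumes {X : Type u} (a : ℕ → Finset X) (x : ℕ → X) : Prop :=
  ∃ M : Set ℕ, M.Infinite ∧ ∀ i ∈ M, ∀ j ∈ M, i < j → x i ∈ a j

/-- A set `C` of ordinals is cofinal in the ordinal `α` if every `β < α` is below
some member of `C`. -/
def CofinalIn (C : Set Ordinal.{u}) (α : Ordinal.{u}) : Prop :=
  ∀ β < α, ∃ γ ∈ C, β ≤ γ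

/-- `∃_cf β < α, φ β`: the set of `β < α` satisfying `φ` is cofinal in `α`. -/
def ExCf (α : Ordinal.{u}) (φ : Ordinal.{u} → Prop) : Prop :=
  CofinalIn {β | β < α ∧ φ β} α

open scoped Classical

/-- Infinite Ramsey theorem for pairs with two colours, on an infinite subset of `ℕ`. -/
lemma ramsey_pair (M : Set ℕ) (hM : M.Infinite) (c : ℕ → ℕ → Bool) :
    ∃ M' : Set ℕ, M' ⊆ M ∧ M'.Infinite ∧
      ∃ k : Bool, ∀ i ∈ M', ∀ j ∈ M', i < j → c i j = k := by
  haveI : (Filter.cofinite ⊓ Filter.principal M).NeBot :=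
    hM.cofinite_inf_principal_neBot
  set U : Ultrafilter ℕ := Ultrafilter.of (Filter.cofinite ⊓ Filter.principal M) with hU
  have hle : (U : Filter ℕ) ≤ Filter.cofinite ⊓ Filter.principal M := Ultrafilter.of_le _
  have hcof : ∀ s : Set ℕ, sᶜ.Finite → s ∈ U := fun s hs =>
    hle (Filter.mem_inf_of_left (by simpa [Filter.mem_cofinite] using hs))
  have hMU : M ∈ U := hle (Filter.mem_inf_of_right (Filter.mem_principal_self M))
  -- choose the majority colour
  obtain ⟨k, hk⟩ : ∃ k : Bool, {i | {j | c i j = k} ∈ U} ∈ U := by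
    by_cases h : {i | {j | c i j = true} ∈ U} ∈ U
    · exact ⟨true, h⟩
    · refine ⟨false, ?_⟩
      have := (Ultrafilter.compl_mem_iff_notMem (f := U)).2 h
      refine U.mem_of_superset this ?_
      intro i hi
      have : {j | c i j = true} ∉ U := hi
      have hc : {j | c i j = true}ᶜ ∈ U := (Ultrafilter.compl_mem_iff_notMem).2 this
      refine U.mem_of_superset hc ?_
      intro j hj
      simp only [Set.mem_compl_iff, Set.mem_setOf_eq] at hj ⊢
      cases h' : c i j with
      | false => rfl
      | true => exact absurd h' hj
  set S : Set ℕ := {i | {j | c i j = k} ∈ U} ∩ M with hS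
  have hSU : S ∈ U := U.inter_mem hk hMU
  -- recursively build a monochromatic sequence
  have step : ∀ p : {p : ℕ × Set ℕ // p.2 ∈ U ∧ p.1 ∈ p.2 ∧ p.2 ⊆ S},
      ∃ q : {p : ℕ × Set ℕ // p.2 ∈ U ∧ p.1 ∈ p.2 ∧ p.2 ⊆ S},
        q.1.2 ⊆ p.1.2 ∩ {j | c p.1.1 j = k} ∩ Set.Ioi p.1.1 := by
    rintro ⟨⟨n, V⟩, hV, hnV, hVS⟩
    have hGn : {j | c n j = k} ∈ U := (hVS hnV).1
    have hIoi : Set.Ioi n ∈ U := hcof _ (by simpa using Set.finite_Iic n)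
    have hV' : V ∩ {j | c n j = k} ∩ Set.Ioi n ∈ U := U.inter_mem (U.inter_mem hV hGn) hIoi
    obtain ⟨n', hn'⟩ := Ultrafilter.nonempty_of_mem hV'
    exact ⟨⟨⟨n', V ∩ {j | c n j = k} ∩ Set.Ioi n⟩, hV', hn',
      fun z hz => hVS hz.1.1⟩, subset_rfl⟩
  obtain ⟨n₀, hn₀⟩ := Ultrafilter.nonempty_of_mem hSU
  let f : ℕ → {p : ℕ × Set ℕ // p.2 ∈ U ∧ p.1 ∈ p.2 ∧ p.2 ⊆ S} :=
    fun m => Nat.rec ⟨⟨n₀, S⟩, hSU, hn₀, subset_rfl⟩ (fun _ p => Classical.choose (step p)) m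
  have hf_succ : ∀ m, (f (m + 1)).1.2 ⊆
      (f m).1.2 ∩ {j | c (f m).1.1 j = k} ∩ Set.Ioi (f m).1.1 :=
    fun m => Classical.choose_spec (step (f m))
  -- monotonicity of the sets
  have hsub : ∀ l m, l < m → (f m).1.2 ⊆ {j | c (f l).1.1 j = k} ∩ Set.Ioi (f l).1.1 := by
    intro l m hlm
    induction m with
    | zero => omega
    | succ m ih =>
      rcases Nat.lt_succ_iff_lt_or_eq.1 hlm with h | h
      · exact fun z hz => ih h ((hf_succ m hz).1.1)
      · subst h
        exact fun z hz => ⟨(hf_succ l hz).1.2, (hf_succ l hz).2⟩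
  have hmono : StrictMono (fun m => (f m).1.1) := strictMono_nat_of_lt_succ fun m => by
    have := hsub m (m + 1) (Nat.lt_succ_self m) (f (m + 1)).2.2.1
    exact this.2
  have hmem : ∀ m, (f m).1.1 ∈ S := fun m => (f m).2.2.2 (f m).2.2.1
  refine ⟨Set.range (fun m => (f m).1.1), ?_, ?_, k, ?_⟩
  · rintro _ ⟨m, rfl⟩; exact (hmem m).2
  · exact Set.infinite_range_of_injective hmono.injective
  · rintro _ ⟨l, rfl⟩ _ ⟨m, rfl⟩ hij
    have hlm : l < m := hmono.lt_iff_lt.1 hij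
    exact (hsub l m hlm (f m).2.2.1).1

/-- Pointwise: subsumption by `a ∪ b` is equivalent to subsumption by `a` or by `b`. -/
lemma subsumes_union_iff {X : Type u} (a b : ℕ → Finset X) (x : ℕ → X) :
    Subsumes (fun i => a i ∪ b i) x ↔ Subsumes a x ∨ Subsumes b x := by
  constructor
  · rintro ⟨M, hM, hsub⟩
    obtain ⟨M', hM'M, hM', k, hk⟩ :=
      ramsey_pair M hM (fun i j => decide (x i ∈ a j))
    cases k with
    | true =>
      exact Or.inl ⟨M', hM', fun i hi j hj hij => of_decide_eq_true (hk i hi j hj hij)⟩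
    | false =>
      refine Or.inr ⟨M', hM', fun i hi j hj hij => ?_⟩
      have h1 : x i ∈ a j ∪ b j := hsub i (hM'M hi) j (hM'M hj) hij
      have h2 : x i ∉ a j := of_decide_eq_false (hk i hi j hj hij)
      exact (Finset.mem_union.1 h1).resolve_left h2
  · rintro (⟨M, hM, hsub⟩ | ⟨M, hM, hsub⟩)
    · exact ⟨M, hM, fun i hi j hj hij => Finset.mem_union_left _ (hsub i hi j hj hij)⟩
    · exact ⟨M, hM, fun i hi j hj hij => Finset.mem_union_right _ (hsub i hi j hj hij)⟩

lemma exCf_congr {α : Ordinal.{u}} {φ ψ : Ordinal.{u} → Prop}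
    (h : ∀ β < α, (φ β ↔ ψ β)) : ExCf α φ ↔ ExCf α ψ := by
  constructor <;> intro H β hβ <;> obtain ⟨γ, ⟨hγ, hφ⟩, hle⟩ := H β hβ
  · exact ⟨γ, ⟨hγ, (h γ hγ).1 hφ⟩, hle⟩
  · exact ⟨γ, ⟨hγ, (h γ hγ).2 hφ⟩, hle⟩

lemma exCf_or_iff {α : Ordinal.{u}} {φ ψ : Ordinal.{u} → Prop} :
    ExCf α (fun β => φ β ∨ ψ β) ↔ ExCf α φ ∨ ExCf α ψ := by
  constructor
  · intro H
    by_cases hφ : ExCf α φ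
    · exact Or.inl hφ
    · refine Or.inr ?_
      simp only [ExCf, CofinalIn, not_forall] at hφ
      obtain ⟨β₀, hβ₀, hno⟩ := hφ
      intro β hβ
      have hmax : max β β₀ < α := max_lt hβ hβ₀
      obtain ⟨γ, ⟨hγα, hγ⟩, hle⟩ := H (max β β₀) hmax
      rcases hγ with h | h
      · exact absurd ⟨γ, ⟨hγα, h⟩, le_trans (le_max_right _ _) hle⟩ hno
      · exact ⟨γ, ⟨hγα, h⟩, le_trans (le_max_left _ _) hle⟩
  · rintro (H | H) <;> intro β hβ <;> obtain ⟨γ, ⟨hγα, hγ⟩, hle⟩ := H β hβ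
    · exact ⟨γ, ⟨hγα, Or.inl hγ⟩, hle⟩
    · exact ⟨γ, ⟨hγα, Or.inr hγ⟩, hle⟩

open scoped Classical in
/-- Key equivalence in Lemma 5.7: the doubly-cofinal subsumption condition for the
pointwise unions `a ∪ b` holds iff it holds for `a` or for `b`. -/
theorem exCf_exCf_subsumes_union_iff {X : Type u} (ν : Ordinal.{u})
    (g : Ordinal.{u} → Ordinal.{u})
    (x : Ordinal.{u} → Ordinal.{u} → ℕ → X)
    (a b : Ordinal.{u} → Ordinal.{u} → ℕ → Finset X) :
    (ExCf ν fun μ => ExCf (g μ) fun β' =>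
        Subsumes (fun i => a μ β' i ∪ b μ β' i) (x μ β')) ↔
      (ExCf ν fun μ => ExCf (g μ) fun β' => Subsumes (a μ β') (x μ β')) ∨
        (ExCf ν fun μ => ExCf (g μ) fun β' => Subsumes (b μ β') (x μ β')) := by
  rw [show (fun μ => ExCf (g μ) fun β' =>
        Subsumes (fun i => a μ β' i ∪ b μ β' i) (x μ β')) =
      (fun μ => ExCf (g μ) fun β' => Subsumes (a μ β') (x μ β') ∨
        Subsumes (b μ β') (x μ β')) from
    funext fun μ => propext (exCf_congr fun β' _ => subsumes_union_iff _ _ _)]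
  rw [show (fun μ => ExCf (g μ) fun β' => Subsumes (a μ β') (x μ β') ∨
        Subsumes (b μ β') (x μ β')) =
      (fun μ => (ExCf (g μ) fun β' => Subsumes (a μ β') (x μ β')) ∨
        (ExCf (g μ) fun β' => Subsumes (b μ β') (x μ β'))) from
    funext fun μ => propext exCf_or_iff]
  exact exCf_or_iff
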